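/- Assume d is not a square in F. Let χ : F^× → ℂ^× be a group homomorphism trivial on o^×, and let Ω : T(F) → ℂ^× be a group homomorphism with conductor exponent C := c(Ω) and with Ω(z·1) = χ(z)² for all z ∈ F^×. Let B : GL₂(F) → ℂ satisfy: (E) B(t·g·k) = Ω(t)·B(g) for all t ∈ T(F), g ∈ GL₂(F), k ∈ I; (N) for every set R ⊆ o of representatives of o/p and every g ∈ GL₂(F), ∑_{u ∈ R} B(g·[[1, 0], [u, 1]]) = −B(g·w); (A) B(g·[[0, 1], [ϖ, 0]]) = −χ(ϖ)·B(g) for all g ∈ GL₂(F). Then for every integer r ≥ 1: if r ≥ C then B(diag(ϖ^r, 1)) = −q·B(diag(ϖ^r, 1)·w), and if r < C then B(diag(ϖ^r, 1)) = 0. -/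

import Mathlib

open Matrix

noncomputable section

abbrev Zm0 : Type := WithZero (Multiplicative ℤ)

/-- `ev n` is the value (in `ℤₘ₀ = WithZero (Multiplicative ℤ)`) of an element of additive
valuation `n`; thus `x ∈ 𝔭^n` iff `v x ≤ ev n`, `x ∈ 𝔬` iff `v x ≤ ev 0`, and `x ∈ 𝔬^×` iff
`v x = ev 0`. -/
def ev (n : ℤ) : Zm0 := ((Multiplicative.ofAdd (-n) : Multiplicative ℤ) : Zm0)

variable {F : Type*} [Field F]

/-- the matrix t(x,y) = [[x, cy],[−ay, x−by]] -/
def tmat (a b c x y : F) : Matrix (Fin 2) (Fin 2) F :=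
  !![x, c * y; -(a * y), x - b * y]

/-- the torus T(F) ⊆ GL₂(F), as a set of matrices -/
def TSet (a b c : F) : Set (Matrix (Fin 2) (Fin 2) F) :=
  {m | ∃ x y : F, x ^ 2 - b * x * y + a * c * y ^ 2 ≠ 0 ∧ m = tmat a b c x y}

def wmat (F : Type*) [Field F] : Matrix (Fin 2) (Fin 2) F := !![0, 1; -1, 0]

/-- GL₂(𝔬) : integral entries and unit determinant -/
def GL2O (v : Valuation F Zm0) : Set (Matrix (Fin 2) (Fin 2) F) :=
  {g | (∀ i j, v (g i j) ≤ ev 0) ∧ v g.det = ev 0}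

/-- the Iwahori subgroup I = { g ∈ GL₂(𝔬) : g₂₁ ∈ 𝔭 } -/
def Iwahori (v : Valuation F Zm0) : Set (Matrix (Fin 2) (Fin 2) F) :=
  {g | g ∈ GL2O v ∧ v (g 1 0) ≤ ev 1}

/-- membership in U_m ⊆ T(F): U_0 = T(F) ∩ GL₂(𝔬), and for m ≥ 1,
U_m = { t ∈ T(F) : t − 1 ∈ ϖ^m·M₂(𝔬) } -/
def Umem (v : Valuation F Zm0) (a b c : F) (m : ℕ) (t : Matrix (Fin 2) (Fin 2) F) : Prop :=
  t ∈ TSet a b c ∧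
    (if m = 0 then (∀ i j, v (t i j) ≤ ev 0) ∧ v t.det = ev 0
     else ∀ i j, v ((t - 1) i j) ≤ ev m)

lemma ev_zero : ev 0 = 1 := by simp [ev]

lemma ev_mul (m n : ℤ) : ev m * ev n = ev (m + n) := by
  rw [ev, ev, ev, ← WithZero.coe_mul, ← ofAdd_add, neg_add]

lemma ev_le {m n : ℤ} : ev m ≤ ev n ↔ n ≤ m := by
  rw [ev, ev, WithZero.coe_le_coe, Multiplicative.ofAdd_le]; omega

lemma ev_ne_zero (n : ℤ) : ev n ≠ 0 := WithZero.coe_ne_zero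

lemma ev_inv (n : ℤ) : (ev n)⁻¹ = ev (-n) := by
  rw [ev, ev, ← WithZero.coe_inv, ← ofAdd_neg]

lemma zm0_unit {γ : Zm0} (h0 : γ ≤ ev 0) (h1 : ¬ γ ≤ ev 1) : γ = ev 0 := by
  induction γ using WithZero.recZeroCoe with
  | zero => exact absurd (zero_le') h1
  | coe x =>
    rw [ev, WithZero.coe_le_coe] at h0 h1
    rw [ev, WithZero.coe_inj]
    have hx0 : Multiplicative.toAdd x ≤ 0 := by simpa using Multiplicative.toAdd_le.2 h0
    have hx1 : ¬ Multiplicative.toAdd x ≤ -1 := fun h => h1 (Multiplicative.toAdd_le.1 h)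
    have hx : Multiplicative.toAdd x = 0 := by omega
    rw [show x = Multiplicative.ofAdd (Multiplicative.toAdd x) from rfl, hx]; norm_num

lemma tmat_mul (a b c x y x' y' : F) :
    tmat a b c x y * tmat a b c x' y' =
      tmat a b c (x * x' - a * c * (y * y')) (x * y' + x' * y - b * (y * y')) := by
  ext i j
  fin_cases i <;> fin_cases j <;>
    simp [tmat, Matrix.mul_apply, Fin.sum_univ_two] <;> ring

lemma tmat_det (a b c x y : F) :
    (tmat a b c x y).det = x ^ 2 - b * x * y + a * c * y ^ 2 := by
  simp [tmat, Matrix.det_fin_two]; ring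

lemma tmat_one (a b c : F) : tmat a b c 1 0 = 1 := by
  ext i j; fin_cases i <;> fin_cases j <;> simp [tmat]

lemma tmat_smul (a b c z : F) : tmat a b c z 0 = z • (1 : Matrix (Fin 2) (Fin 2) F) := by
  ext i j; fin_cases i <;> fin_cases j <;> simp [tmat, Matrix.smul_apply]

lemma tmat_mem_TSet {a b c x y : F} (h : x ^ 2 - b * x * y + a * c * y ^ 2 ≠ 0) :
    tmat a b c x y ∈ TSet a b c := ⟨x, y, h, rfl⟩

lemma ev_pow (n : ℕ) : (ev 1) ^ n = ev n := by
  induction n with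
  | zero => simp [ev_zero]
  | succ k ih => rw [pow_succ, ih, ev_mul]; norm_num

lemma ev_lt {m n : ℤ} : ev m < ev n ↔ n < m := by
  rw [lt_iff_le_not_ge, lt_iff_le_not_ge, ev_le, ev_le]

lemma decomp_id (a b c u p E : F) (hc : c ≠ 0) (hE0 : E ≠ 0)
    (hEdef : E = c * u ^ 2 + b * u * p + a * p ^ 2) :
    tmat a b c (c * u + b * p) p * (!![p, 0; 0, 1] * wmat F) *
      !![-c⁻¹, -((c * u + b * p) * (c * E)⁻¹); 0, -E⁻¹] = !![p, 0; 0, 1] * !![1, 0; u, 1] := by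
  subst hEdef
  generalize hE : c * u ^ 2 + b * u * p + a * p ^ 2 = E at hE0 ⊢
  ext i j
  fin_cases i <;> fin_cases j <;>
    (simp [tmat, wmat, Matrix.mul_apply, Fin.sum_univ_two]; field_simp; try (rw [← hE]; ring))

lemma al_id (p t : F) :
    (!![p, 0; 0, 1] * wmat F) * !![0, 1; t, 0] = !![p * t, 0; 0, 1] * !![1, 0; 0, -1] := by
  ext i j
  fin_cases i <;> fin_cases j <;>
    simp [wmat, Matrix.mul_apply, Fin.sum_univ_two]

lemma cong_id (a b c z z' : F) (h' : 1 - b * z' + a * c * z' ^ 2 ≠ 0) :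
    tmat a b c ((1 - b * z' + a * c * (z * z')) / (1 - b * z' + a * c * z' ^ 2))
        ((z - z') / (1 - b * z' + a * c * z' ^ 2)) * tmat a b c 1 z' = tmat a b c 1 z := by
  generalize hD : 1 - b * z' + a * c * z' ^ 2 = D at h' ⊢
  ext i j
  fin_cases i <;> fin_cases j <;>
    (simp [tmat, Matrix.mul_apply, Fin.sum_univ_two]; field_simp; try (rw [← hD]; ring))

variable {v : Valuation F Zm0}

lemma v_ne_zero_of_eq_ev {x : F} {n : ℤ} (h : v x = ev n) : x ≠ 0 := by
  intro h0; rw [h0, map_zero] at h; exact ev_ne_zero n h.symm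

lemma v_one_eq : v (1 : F) = ev 0 := by rw [ev_zero]; exact v.map_one

lemma unit_plus_small {x w : F} (hx : v x = ev 0) (hw : v w ≤ ev 1) : v (x + w) = ev 0 := by
  rw [← hx]
  exact Valuation.map_add_eq_of_lt_left v (lt_of_le_of_lt hw (by rw [hx]; exact ev_lt.2 one_pos))

lemma v_inv_eq {x : F} (hx : v x = ev 0) : v x⁻¹ = ev 0 := by
  rw [map_inv₀, hx, ev_inv]; norm_num

lemma v_mul_unit {x y : F} (hx : v x = ev 0) (hy : v y = ev 0) : v (x * y) = ev 0 := by
  rw [_root_.map_mul, hx, hy, ev_mul]; norm_num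

lemma iwahori_n {u : F} (hu : v u ≤ ev 1) : !![1, 0; u, 1] ∈ Iwahori v := by
  refine ⟨⟨fun i j => ?_, ?_⟩, by simpa using hu⟩
  · fin_cases i <;> fin_cases j
    · show v 1 ≤ ev 0; rw [v_one_eq]
    · show v 0 ≤ ev 0; simp
    · show v u ≤ ev 0; exact le_trans hu (ev_le.2 (by norm_num))
    · show v 1 ≤ ev 0; rw [v_one_eq]
  · have : (!![(1:F), 0; u, 1]).det = 1 := by simp [Matrix.det_fin_two]
    rw [this, v_one_eq]

lemma iwahori_diag : !![(1 : F), 0; 0, -1] ∈ Iwahori v := by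
  refine ⟨⟨fun i j => ?_, ?_⟩, by simpa using zero_le'⟩
  · fin_cases i <;> fin_cases j
    · show v 1 ≤ ev 0; rw [v_one_eq]
    · show v 0 ≤ ev 0; simp
    · show v 0 ≤ ev 0; simp
    · show v (-1) ≤ ev 0; rw [Valuation.map_neg, v_one_eq]
  · have : (!![(1:F), 0; 0, -1]).det = -1 := by simp [Matrix.det_fin_two]
    rw [this, Valuation.map_neg, v_one_eq]

lemma iwahori_k {c x₀ E : F} (hc : v c = ev 0) (hx₀ : v x₀ ≤ ev 0) (hE : v E = ev 0) :
    !![-c⁻¹, -(x₀ * (c * E)⁻¹); 0, -E⁻¹] ∈ Iwahori v := by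
  have hcE : v (c * E)⁻¹ = ev 0 := v_inv_eq (v_mul_unit hc hE)
  refine ⟨⟨fun i j => ?_, ?_⟩, by simpa using zero_le'⟩
  · fin_cases i <;> fin_cases j
    · show v (-c⁻¹) ≤ ev 0; rw [Valuation.map_neg, v_inv_eq hc]
    · show v (-(x₀ * (c * E)⁻¹)) ≤ ev 0
      rw [Valuation.map_neg, _root_.map_mul, hcE, ev_zero, mul_one]; exact hx₀
    · show v 0 ≤ ev 0; simp
    · show v (-E⁻¹) ≤ ev 0; rw [Valuation.map_neg, v_inv_eq hE]
  · have : (!![-c⁻¹, -(x₀ * (c * E)⁻¹); 0, -E⁻¹]).det = c⁻¹ * E⁻¹ := by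
      simp [Matrix.det_fin_two]
    rw [this, _root_.map_mul, v_inv_eq hc, v_inv_eq hE, ev_mul]; norm_num

lemma v_mul_le_of_int {x y : F} (hx : v x ≤ ev 0) : v (x * y) ≤ v y := by
  rw [_root_.map_mul]
  calc v x * v y ≤ ev 0 * v y := mul_le_mul_left hx _
  _ = v y := by rw [ev_zero, one_mul]

/-- values of the Iwahori-fixed Atkin–Lehner eigenvector B in the
Ω-Waldspurger model: for r ≥ 1, B(diag(ϖ^r,1)) = −q·B(diag(ϖ^r,1)·w) if r ≥ c(Ω), and
B(diag(ϖ^r,1)) = 0 if r < c(Ω). -/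
theorem stmt10
    (v : Valuation F Zm0) (ϖ : F) (hϖ : v ϖ = ev 1)
    (a b c : F)
    (hao : v a ≤ ev 0) (hbo : v b ≤ ev 0) (hc : v c = ev 0)
    (hd0 : b ^ 2 - 4 * (a * c) ≠ 0)
    (hnonsq : ∀ s : F, s ^ 2 ≠ b ^ 2 - 4 * (a * c))
    -- q is the cardinality of the residue field 𝔬/𝔭 :
    (q : ℕ) (hq : ∃ R : Finset F, R.card = q ∧ (∀ r ∈ R, v r ≤ ev 0) ∧
      ∀ x : F, v x ≤ ev 0 → ∃! r, r ∈ R ∧ v (x - r) ≤ ev 1)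
    -- χ : F^× → ℂ^× a homomorphism trivial on 𝔬^× :
    (χ : F → ℂ)
    (hχmul : ∀ x y : F, x ≠ 0 → y ≠ 0 → χ (x * y) = χ x * χ y)
    (hχne : ∀ x : F, x ≠ 0 → χ x ≠ 0)
    (hχtriv : ∀ u : F, v u = ev 0 → χ u = 1)
    -- Ω : T(F) → ℂ^× a homomorphism with conductor exponent C and Ω(z·1) = χ(z)² :
    (Ω : Matrix (Fin 2) (Fin 2) F → ℂ)
    (hΩmul : ∀ s t, s ∈ TSet a b c → t ∈ TSet a b c → Ω (s * t) = Ω s * Ω t)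
    (hΩne : ∀ t ∈ TSet a b c, Ω t ≠ 0)
    (C : ℕ)
    (hcond : ∀ t, Umem v a b c C t → Ω t = 1)
    (hleast : ∀ m : ℕ, m < C → ∃ t, Umem v a b c m t ∧ Ω t ≠ 1)
    (hcent : ∀ z : F, z ≠ 0 → Ω (z • (1 : Matrix (Fin 2) (Fin 2) F)) = (χ z) ^ 2)
    (B : Matrix (Fin 2) (Fin 2) F → ℂ)
    -- (E) equivariance :
    (hE : ∀ t g k, t ∈ TSet a b c → k ∈ Iwahori v → B (t * g * k) = Ω t * B g)
    -- (N) summing over any set of representatives of 𝔬/𝔭 :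
    (hN : ∀ R : Finset F, (∀ r ∈ R, v r ≤ ev 0) →
      (∀ x : F, v x ≤ ev 0 → ∃! r, r ∈ R ∧ v (x - r) ≤ ev 1) →
      ∀ g, (∑ u ∈ R, B (g * !![1, 0; u, 1])) = - B (g * wmat F))
    -- (A) Atkin–Lehner eigenvector property :
    (hA : ∀ g, B (g * !![0, 1; ϖ, 0]) = -(χ ϖ) * B g) :
    ∀ r : ℕ, 1 ≤ r →
      (C ≤ r → B !![ϖ ^ r, 0; 0, 1] = -(q : ℂ) * B (!![ϖ ^ r, 0; 0, 1] * wmat F))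
      ∧ (r < C → B !![ϖ ^ r, 0; 0, 1] = 0) := by
  classical
  -- basic facts
  have hc0 : c ≠ 0 := v_ne_zero_of_eq_ev hc
  have hϖ0 : ϖ ≠ 0 := v_ne_zero_of_eq_ev hϖ
  have hχϖ : χ ϖ ≠ 0 := hχne ϖ hϖ0
  have hvp : ∀ n : ℕ, v (ϖ ^ n) = ev n := fun n => by
    rw [map_pow, hϖ, ev_pow]
  have hev1le0 : (ev 1 : Zm0) ≤ ev 0 := ev_le.2 (by norm_num)
  have hevr1 : ∀ n : ℕ, 1 ≤ n → (ev n : Zm0) ≤ ev 1 := fun n hn => ev_le.2 (by exact_mod_cast hn)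
  -- TSet and Ω basics
  have hQform : ∀ x y : F, (tmat a b c x y).det = x ^ 2 - b * x * y + a * c * y ^ 2 :=
    tmat_det a b c
  have hT1 : (1 : Matrix (Fin 2) (Fin 2) F) ∈ TSet a b c :=
    ⟨1, 0, by norm_num, (tmat_one a b c).symm⟩
  have hΩ1 : Ω 1 = 1 := by
    have h2 := hΩmul 1 1 hT1 hT1
    rw [mul_one] at h2
    have := hΩne 1 hT1
    field_simp at h2
    tauto
  have hBk : ∀ g k, k ∈ Iwahori v → B (g * k) = B g := by
    intro g k hk
    have := hE 1 g k hT1 hk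
    rwa [one_mul, hΩ1, one_mul] at this
  -- Q is a unit when y is small
  have hQunit : ∀ x y : F, v x = ev 0 → v y ≤ ev 1 →
      v (x ^ 2 - b * x * y + a * c * y ^ 2) = ev 0 := by
    intro x y hx hy
    have hx2 : v (x ^ 2) = ev 0 := by rw [map_pow, hx, ev_zero, one_pow]
    have : x ^ 2 - b * x * y + a * c * y ^ 2 = x ^ 2 + (a * c * y ^ 2 - b * x * y) := by ring
    rw [this]
    refine unit_plus_small hx2 ?_
    refine le_trans (v.map_sub _ _) (max_le ?_ ?_)
    · calc v (a * c * y ^ 2) = v a * v c * (v y * v y) := by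
            rw [_root_.map_mul, _root_.map_mul, pow_two, _root_.map_mul]
      _ ≤ ev 0 * ev 0 * (ev 1 * ev 0) :=
            mul_le_mul' (mul_le_mul' hao hc.le) (mul_le_mul' hy (le_trans hy hev1le0))
      _ = ev 1 := by rw [ev_mul, ev_mul, ev_mul]; norm_num
    · calc v (b * x * y) = v b * v x * v y := by rw [_root_.map_mul, _root_.map_mul]
      _ ≤ ev 0 * ev 0 * ev 1 := mul_le_mul' (mul_le_mul' hbo hx.le) hy
      _ = ev 1 := by rw [ev_mul, ev_mul]; norm_num
  have hQne : ∀ x y : F, v x = ev 0 → v y ≤ ev 1 →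
      x ^ 2 - b * x * y + a * c * y ^ 2 ≠ 0 := fun x y hx hy =>
    v_ne_zero_of_eq_ev (hQunit x y hx hy)
  have hTz : ∀ z : F, v z ≤ ev 1 → tmat a b c 1 z ∈ TSet a b c := fun z hz =>
    ⟨1, z, by simpa using hQne 1 z v_one_eq hz, rfl⟩
  -- bounds on products with integral elements
  have hint : ∀ (e z : F) (γ : Zm0), v e ≤ ev 0 → v z ≤ γ → v (e * z) ≤ γ :=
    fun e z γ he hz => le_trans (v_mul_le_of_int he) hz
  -- Ω on tmat x y with x a unit reduces to the "ψ" value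
  have hψX : ∀ x y : F, v x = ev 0 → x ^ 2 - b * x * y + a * c * y ^ 2 ≠ 0 →
      Ω (tmat a b c x y) = Ω (tmat a b c 1 (x⁻¹ * y)) := by
    intro x y hx hQ
    have hx0 : x ≠ 0 := v_ne_zero_of_eq_ev hx
    have hsplit : tmat a b c x y = tmat a b c x 0 * tmat a b c 1 (x⁻¹ * y) := by
      ext i j
      fin_cases i <;> fin_cases j <;>
        (simp [tmat, Matrix.mul_apply, Fin.sum_univ_two]; try field_simp; try ring)
    have hTx0 : tmat a b c x 0 ∈ TSet a b c :=
      ⟨x, 0, by simpa using pow_ne_zero 2 hx0, rfl⟩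
    have hT2 : tmat a b c 1 (x⁻¹ * y) ∈ TSet a b c := by
      refine ⟨1, x⁻¹ * y, ?_, rfl⟩
      have he : 1 ^ 2 - b * 1 * (x⁻¹ * y) + a * c * (x⁻¹ * y) ^ 2 =
          (x ^ 2 - b * x * y + a * c * y ^ 2) / x ^ 2 := by field_simp
      rw [he]
      exact div_ne_zero hQ (pow_ne_zero 2 hx0)
    rw [hsplit, hΩmul _ _ hTx0 hT2, tmat_smul, hcent x hx0, hχtriv x hx, one_pow, one_mul]
  -- triviality of ψ deep enough
  have hψtriv : ∀ z : F, v z ≤ ev 1 → v z ≤ ev C → Ω (tmat a b c 1 z) = 1 := by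
    intro z hz1 hzC
    apply hcond
    refine ⟨hTz z hz1, ?_⟩
    have hz0 : v z ≤ ev 0 := le_trans hz1 hev1le0
    by_cases hC : C = 0
    · rw [if_pos hC]
      constructor
      · intro i j
        fin_cases i <;> fin_cases j
        · show v 1 ≤ ev 0; rw [v_one_eq]
        · show v (c * z) ≤ ev 0; exact hint c z _ hc.le hz0
        · show v (-(a * z)) ≤ ev 0; rw [Valuation.map_neg]; exact hint a z _ hao hz0
        · show v (1 - b * z) ≤ ev 0
          refine le_trans (v.map_sub _ _) (max_le (by rw [v_one_eq]) (hint b z _ hbo hz0))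
      · rw [hQform]
        simpa using hQunit 1 z v_one_eq hz1
    · rw [if_neg hC]
      have hsub : tmat a b c 1 z - 1 = !![0, c * z; -(a * z), -(b * z)] := by
        ext i j
        fin_cases i <;> fin_cases j <;> simp [tmat, Matrix.one_apply] <;> ring
      rw [hsub]
      intro i j
      fin_cases i <;> fin_cases j
      · show v 0 ≤ ev C; simp
      · show v (c * z) ≤ ev C; exact hint c z _ hc.le hzC
      · show v (-(a * z)) ≤ ev C; rw [Valuation.map_neg]; exact hint a z _ hao hzC
      · show v (-(b * z)) ≤ ev C; rw [Valuation.map_neg]; exact hint b z _ hbo hzC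
  have hdivu : ∀ (x Δ : F) (γ : Zm0), v x ≤ γ → v Δ = ev 0 → v (x / Δ) ≤ γ := by
    intro x Δ γ hx hΔ
    rw [map_div₀, hΔ, ev_zero, div_one]; exact hx
  -- congruence property of ψ modulo 𝔭^C
  have hψcong : C ≠ 0 → ∀ z z' : F, v z ≤ ev 1 → v z' ≤ ev 1 → v (z - z') ≤ ev C →
      Ω (tmat a b c 1 z) = Ω (tmat a b c 1 z') := by
    intro hC z z' hz hz' hd
    have hΔu : v (1 - b * z' + a * c * z' ^ 2) = ev 0 := by
      have h1 : (1 : F) ^ 2 - b * 1 * z' + a * c * z' ^ 2 = 1 - b * z' + a * c * z' ^ 2 := by ring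
      rw [← h1]; exact hQunit 1 z' v_one_eq hz'
    have hΔ0 : (1 - b * z' + a * c * z' ^ 2) ≠ 0 := v_ne_zero_of_eq_ev hΔu
    set Δ := 1 - b * z' + a * c * z' ^ 2 with hΔdef
    set X := (1 - b * z' + a * c * (z * z')) / Δ with hXdef
    set Y := (z - z') / Δ with hYdef
    have hid := cong_id a b c z z' hΔ0
    have hdet : (tmat a b c X Y).det * (tmat a b c 1 z').det = (tmat a b c 1 z).det := by
      rw [← Matrix.det_mul, hid]
    have hQz : (tmat a b c 1 z).det ≠ 0 := by
      rw [hQform]; exact hQne 1 z v_one_eq hz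
    have hQXY : (tmat a b c X Y).det ≠ 0 := by
      intro h; rw [h, zero_mul] at hdet; exact hQz hdet.symm
    have hTr : tmat a b c X Y ∈ TSet a b c := ⟨X, Y, by rw [← hQform]; exact hQXY, rfl⟩
    have hY : v Y ≤ ev C := hdivu _ _ _ hd hΔu
    have hX1 : v (X - 1) ≤ ev C := by
      have he : X - 1 = (a * (c * (z' * (z - z')))) / Δ := by
        rw [hXdef, div_sub_one hΔ0, hΔdef]; ring
      rw [he]
      refine hdivu _ _ _ ?_ hΔu
      exact hint a _ _ hao (hint c _ _ hc.le (hint z' _ _ (le_trans hz' hev1le0) hd))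
    have hΩr : Ω (tmat a b c X Y) = 1 := by
      apply hcond
      refine ⟨hTr, ?_⟩
      rw [if_neg hC]
      have hsub : tmat a b c X Y - 1 = !![X - 1, c * Y; -(a * Y), X - 1 - b * Y] := by
        ext i j
        fin_cases i <;> fin_cases j <;> simp [tmat, Matrix.one_apply] <;> ring
      rw [hsub]
      intro i j
      fin_cases i <;> fin_cases j
      · exact hX1
      · show v (c * Y) ≤ ev C; exact hint c _ _ hc.le hY
      · show v (-(a * Y)) ≤ ev C; rw [Valuation.map_neg]; exact hint a _ _ hao hY
      · show v (X - 1 - b * Y) ≤ ev C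
        exact le_trans (v.map_sub _ _) (max_le hX1 (hint b _ _ hbo hY))
    calc Ω (tmat a b c 1 z) = Ω (tmat a b c X Y * tmat a b c 1 z') := by rw [hid]
      _ = Ω (tmat a b c X Y) * Ω (tmat a b c 1 z') := hΩmul _ _ hTr (hTz z' hz')
      _ = Ω (tmat a b c 1 z') := by rw [hΩr, one_mul]
  -- additivity of ψ
  have hψadd : C ≠ 0 → ∀ (n : ℕ) (z z' : F), 1 ≤ n → C ≤ 2 * n → v z ≤ ev n → v z' ≤ ev n →
      Ω (tmat a b c 1 z) * Ω (tmat a b c 1 z') = Ω (tmat a b c 1 (z + z')) := by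
    intro hC n z z' hn hCn hz hz'
    have hzn1 : (ev n : Zm0) ≤ ev 1 := hevr1 n hn
    have hz1 : v z ≤ ev 1 := le_trans hz hzn1
    have hz'1 : v z' ≤ ev 1 := le_trans hz' hzn1
    have hzz' : v (z * z') ≤ ev (n + n : ℕ) := by
      rw [_root_.map_mul]
      calc v z * v z' ≤ ev n * ev n := mul_le_mul' hz hz'
        _ = ev (n + n : ℕ) := by rw [ev_mul]; norm_num
    have hzz'C : v (z * z') ≤ ev C := le_trans hzz' (ev_le.2 (by push_cast; omega))
    have hzz'1 : v (z * z') ≤ ev 1 := le_trans hzz' (hevr1 _ (by omega))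
    have hmulid := tmat_mul a b c 1 z 1 z'
    have hX'u : v (1 * 1 - a * c * (z * z')) = ev 0 := by
      have he : 1 * 1 - a * c * (z * z') = 1 + (-(a * (c * (z * z')))) := by ring
      rw [he]
      refine unit_plus_small v_one_eq ?_
      rw [Valuation.map_neg]
      exact hint a _ _ hao (hint c _ _ hc.le hzz'1)
    have hdet2 : (tmat a b c (1 * 1 - a * c * (z * z')) (1 * z' + 1 * z - b * (z * z'))).det
        = (tmat a b c 1 z).det * (tmat a b c 1 z').det := by
      rw [← hmulid, Matrix.det_mul]
    have hQ2 : (1 * 1 - a * c * (z * z')) ^ 2 - b * (1 * 1 - a * c * (z * z')) *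
        (1 * z' + 1 * z - b * (z * z')) + a * c * (1 * z' + 1 * z - b * (z * z')) ^ 2 ≠ 0 := by
      rw [← hQform, hdet2, hQform, hQform]
      exact mul_ne_zero (hQne 1 z v_one_eq hz1) (hQne 1 z' v_one_eq hz'1)
    have hY'n : v (1 * z' + 1 * z - b * (z * z')) ≤ ev n := by
      have he : 1 * z' + 1 * z - b * (z * z') = z' + (z + (-(b * (z * z')))) := by ring
      rw [he]
      refine le_trans (v.map_add _ _) (max_le hz' ?_)
      refine le_trans (v.map_add _ _) (max_le hz ?_)
      rw [Valuation.map_neg]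
      exact hint b _ _ hbo (le_trans hzz' (ev_le.2 (by push_cast; omega)))
    have harg1 : v ((1 * 1 - a * c * (z * z'))⁻¹ * (1 * z' + 1 * z - b * (z * z'))) ≤ ev 1 :=
      hint _ _ _ (v_inv_eq hX'u).le (le_trans hY'n hzn1)
    have hdiff : v ((1 * 1 - a * c * (z * z'))⁻¹ * (1 * z' + 1 * z - b * (z * z')) - (z + z'))
        ≤ ev C := by
      have hX0 : (1 * 1 - a * c * (z * z')) ≠ 0 := v_ne_zero_of_eq_ev hX'u
      have he : (1 * 1 - a * c * (z * z'))⁻¹ * (1 * z' + 1 * z - b * (z * z')) - (z + z')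
          = (z * z' * (a * c * (z + z') - b)) / (1 * 1 - a * c * (z * z')) := by
        rw [inv_mul_eq_div, div_sub' hX0, div_eq_div_iff hX0 hX0]
        ring
      rw [he]
      refine hdivu _ _ _ ?_ hX'u
      have hfac : v (a * c * (z + z') - b) ≤ ev 0 := by
        refine le_trans (v.map_sub _ _) (max_le ?_ hbo)
        refine hint _ _ _ ?_ (le_trans (le_trans (v.map_add _ _) (max_le hz1 hz'1)) hev1le0)
        rw [_root_.map_mul]
        calc v a * v c ≤ ev 0 * ev 0 := mul_le_mul' hao hc.le
          _ = ev 0 := by rw [ev_mul]; norm_num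
      calc v (z * z' * (a * c * (z + z') - b)) = v (z * z') * v (a * c * (z + z') - b) :=
            _root_.map_mul v _ _
        _ ≤ ev (n + n : ℕ) * ev 0 := mul_le_mul' hzz' hfac
        _ ≤ ev C := by rw [ev_mul]; exact ev_le.2 (by push_cast; omega)
    calc Ω (tmat a b c 1 z) * Ω (tmat a b c 1 z')
        = Ω (tmat a b c (1 * 1 - a * c * (z * z')) (1 * z' + 1 * z - b * (z * z'))) := by
          rw [← hmulid, hΩmul _ _ (hTz z hz1) (hTz z' hz'1)]
      _ = Ω (tmat a b c 1 ((1 * 1 - a * c * (z * z'))⁻¹ * (1 * z' + 1 * z - b * (z * z')))) :=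
          hψX _ _ hX'u hQ2
      _ = Ω (tmat a b c 1 (z + z')) := hψcong hC _ _ harg1
          (le_trans (le_trans (v.map_add _ _) (max_le hz1 hz'1)) (by rfl)) hdiff
  have hev01 : ¬ ((ev 0 : Zm0) ≤ ev 1) := fun h => by
    have := ev_le.1 h; omega
  have hsubswap : ∀ x y : F, v (x - y) = v (y - x) := by
    intro x y
    rw [show x - y = -(y - x) by ring, Valuation.map_neg]
  -- the set of representatives
  obtain ⟨R, hRcard, hRint, hRrep⟩ := hq
  obtain ⟨rep, hrepP⟩ : ∃ rep : F → F, ∀ x, v x ≤ ev 0 →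
      (rep x ∈ R ∧ v (x - rep x) ≤ ev 1) ∧ ∀ u, u ∈ R → v (x - u) ≤ ev 1 → u = rep x := by
    refine ⟨fun x => if h : v x ≤ ev 0 then (hRrep x h).choose else 0, fun x hx => ?_⟩
    simp only [dif_pos hx]
    obtain ⟨⟨h1, h2⟩, h3⟩ := (hRrep x hx).choose_spec
    exact ⟨⟨h1, h2⟩, fun u hu hxu => h3 u ⟨hu, hxu⟩⟩
  have hrep_self : ∀ u ∈ R, rep u = u := fun u hu =>
    ((hrepP u (hRint u hu)).2 u hu (by simp)).symm
  -- the unique representative of the zero class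
  have h0int : v (0 : F) ≤ ev 0 := by simp
  have hu₀R : rep 0 ∈ R := (hrepP 0 h0int).1.1
  have hu₀p : v (rep 0) ≤ ev 1 := by
    have := (hrepP 0 h0int).1.2
    rwa [zero_sub, Valuation.map_neg] at this
  have hfilter : R.filter (fun u => v u ≤ ev 1) = {rep 0} := by
    ext u
    simp only [Finset.mem_filter, Finset.mem_singleton]
    constructor
    · rintro ⟨huR, hup⟩
      exact (hrepP 0 h0int).2 u huR (by rwa [zero_sub, Valuation.map_neg])
    · rintro rfl
      exact ⟨hu₀R, hu₀p⟩
  -- the "inverse modulo 𝔭" map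
  obtain ⟨invc, hinvc_p, hinvc_u⟩ : ∃ f : F → F, (∀ y, v y ≤ ev 1 → f y = 0) ∧
      (∀ y, ¬ v y ≤ ev 1 → f y = (c * y)⁻¹) :=
    ⟨fun y => if v y ≤ ev 1 then 0 else (c * y)⁻¹, fun y h => if_pos h, fun y h => if_neg h⟩
  have hinvc_unit : ∀ y, v y ≤ ev 0 → ¬ v y ≤ ev 1 → v (invc y) = ev 0 := by
    intro y hy0 hy1
    rw [hinvc_u y hy1]
    exact v_inv_eq (v_mul_unit hc (zm0_unit hy0 hy1))
  have hinvc_int : ∀ y, v y ≤ ev 0 → v (invc y) ≤ ev 0 := by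
    intro y hy0
    by_cases hy : v y ≤ ev 1
    · rw [hinvc_p y hy]; simp
    · exact (hinvc_unit y hy0 hy).le
  have hinvc_congr : ∀ y y', v y ≤ ev 0 → v y' ≤ ev 0 → v (y - y') ≤ ev 1 →
      v (invc y - invc y') ≤ ev 1 := by
    intro y y' hy0 hy'0 hd
    by_cases hy : v y ≤ ev 1
    · have hy' : v y' ≤ ev 1 := by
        have he : y' = y - (y - y') := by ring
        rw [he]
        exact le_trans (v.map_sub _ _) (max_le hy hd)
      rw [hinvc_p y hy, hinvc_p y' hy']; simp
    · have hy' : ¬ v y' ≤ ev 1 := by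
        intro h
        apply hy
        have he : y = (y - y') + y' := by ring
        rw [he]
        exact le_trans (v.map_add _ _) (max_le hd h)
      have hyu : v y = ev 0 := zm0_unit hy0 hy
      have hy'u : v y' = ev 0 := zm0_unit hy'0 hy'
      have hyne : y ≠ 0 := v_ne_zero_of_eq_ev hyu
      have hy'ne : y' ≠ 0 := v_ne_zero_of_eq_ev hy'u
      rw [hinvc_u y hy, hinvc_u y' hy']
      have he : (c * y)⁻¹ - (c * y')⁻¹ = (y' - y) / (c * (y * y')) := by
        field_simp
      rw [he]
      refine hdivu _ _ _ ?_ (v_mul_unit hc (v_mul_unit hyu hy'u))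
      rw [hsubswap y' y]; exact hd
  have hinvc_invol : ∀ y, v y ≤ ev 0 → v (invc (invc y) - y) ≤ ev 1 := by
    intro y hy0
    by_cases hy : v y ≤ ev 1
    · rw [hinvc_p y hy, hinvc_p 0 (by simp), zero_sub, Valuation.map_neg]; exact hy
    · have hyu : v y = ev 0 := zm0_unit hy0 hy
      have hyne : y ≠ 0 := v_ne_zero_of_eq_ev hyu
      rw [hinvc_u y hy]
      have hni : ¬ v (c * y)⁻¹ ≤ ev 1 := by
        rw [v_inv_eq (v_mul_unit hc hyu)]; exact hev01
      rw [hinvc_u _ hni]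
      have he : (c * (c * y)⁻¹)⁻¹ - y = 0 := by field_simp; ring
      rw [he]; simp
  -- the master relation coming from (N)
  have key : ∀ m : ℕ, 1 ≤ m →
      B !![ϖ ^ m, 0; 0, 1] =
        -(1 + ∑ u ∈ R.filter (fun u => ¬ v u ≤ ev 1),
            Ω (tmat a b c (c * u + b * ϖ ^ m) (ϖ ^ m)))
          * B (!![ϖ ^ m, 0; 0, 1] * wmat F) := by
    intro m hm
    have hpm1 : v (ϖ ^ m) ≤ ev 1 := by rw [hvp m]; exact hevr1 m hm
    have hsum := hN R hRint hRrep !![ϖ ^ m, 0; 0, 1]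
    have hterm : ∀ u ∈ R, B (!![ϖ ^ m, 0; 0, 1] * !![1, 0; u, 1]) =
        if v u ≤ ev 1 then B !![ϖ ^ m, 0; 0, 1]
        else Ω (tmat a b c (c * u + b * ϖ ^ m) (ϖ ^ m)) * B (!![ϖ ^ m, 0; 0, 1] * wmat F) := by
      intro u huR
      by_cases hu : v u ≤ ev 1
      · rw [if_pos hu]; exact hBk _ _ (iwahori_n hu)
      · rw [if_neg hu]
        have hu0 : v u = ev 0 := zm0_unit (hRint u huR) hu
        have hEu : v (c * u ^ 2 + b * u * ϖ ^ m + a * (ϖ ^ m) ^ 2) = ev 0 := by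
          have he : c * u ^ 2 + b * u * ϖ ^ m + a * (ϖ ^ m) ^ 2
              = c * u ^ 2 + (b * (u * ϖ ^ m) + a * (ϖ ^ m * ϖ ^ m)) := by ring
          rw [he]
          refine unit_plus_small ?_ ?_
          · refine v_mul_unit hc ?_
            rw [map_pow, hu0, ev_zero, one_pow]
          · refine le_trans (v.map_add _ _) (max_le ?_ ?_)
            · exact hint b _ _ hbo (hint u _ _ hu0.le hpm1)
            · exact hint a _ _ hao (hint (ϖ ^ m) _ _ (le_trans hpm1 hev1le0) hpm1)
        have hE0 : c * u ^ 2 + b * u * ϖ ^ m + a * (ϖ ^ m) ^ 2 ≠ 0 := v_ne_zero_of_eq_ev hEu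
        have hx₀u : v (c * u + b * ϖ ^ m) = ev 0 :=
          unit_plus_small (v_mul_unit hc hu0) (hint b _ _ hbo hpm1)
        have hdec := decomp_id a b c u (ϖ ^ m) _ hc0 hE0 rfl
        have hkI := iwahori_k (v := v) hc hx₀u.le hEu
        have hTt : tmat a b c (c * u + b * ϖ ^ m) (ϖ ^ m) ∈ TSet a b c :=
          ⟨_, _, hQne _ _ hx₀u hpm1, rfl⟩
        rw [← hdec]
        exact hE _ _ _ hTt hkI
    rw [Finset.sum_congr rfl hterm, Finset.sum_ite, hfilter, Finset.sum_const,
      Finset.card_singleton, one_smul, ← Finset.sum_mul] at hsum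
    linear_combination hsum
  -- the Atkin–Lehner relation
  have hAL : ∀ m : ℕ, B !![ϖ ^ (m + 1), 0; 0, 1] = -(χ ϖ) * B (!![ϖ ^ m, 0; 0, 1] * wmat F) := by
    intro m
    have h := hA (!![ϖ ^ m, 0; 0, 1] * wmat F)
    rw [al_id, hBk _ _ iwahori_diag, ← pow_succ] at h
    exact h
  have hq1 : 1 ≤ q := by
    rw [← hRcard]
    exact Finset.card_pos.2 ⟨rep 0, hu₀R⟩
  intro r hr
  constructor
  · -- the case C ≤ r
    intro hCr
    have hkey := key r hr
    have hpr1 : v (ϖ ^ r) ≤ ev 1 := by rw [hvp r]; exact hevr1 r hr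
    have hones : ∀ u ∈ R.filter (fun u => ¬ v u ≤ ev 1),
        Ω (tmat a b c (c * u + b * ϖ ^ r) (ϖ ^ r)) = 1 := by
      intro u hu
      obtain ⟨huR, hu1⟩ := Finset.mem_filter.1 hu
      have hu0 : v u = ev 0 := zm0_unit (hRint u huR) hu1
      have hx₀u : v (c * u + b * ϖ ^ r) = ev 0 :=
        unit_plus_small (v_mul_unit hc hu0) (hint b _ _ hbo hpr1)
      rw [hψX _ _ hx₀u (hQne _ _ hx₀u hpr1)]
      refine hψtriv _ ?_ ?_
      · exact hint _ _ _ (v_inv_eq hx₀u).le hpr1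
      · refine hint _ _ _ (v_inv_eq hx₀u).le ?_
        rw [hvp r]
        exact ev_le.2 (by exact_mod_cast hCr)
    rw [Finset.sum_congr rfl hones, Finset.sum_const, nsmul_eq_mul, mul_one] at hkey
    have hcards := Finset.card_filter_add_card_filter_not
      (s := R) (p := fun u => v u ≤ ev 1)
    rw [hfilter, Finset.card_singleton, hRcard] at hcards
    have hcard : (R.filter (fun u => ¬ v u ≤ ev 1)).card = q - 1 := by omega
    rw [hcard] at hkey
    rw [hkey]
    have : ((q - 1 : ℕ) : ℂ) = (q : ℂ) - 1 := by
      push_cast [Nat.cast_sub hq1]; ring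
    rw [this]; ring
  · -- the case r < C
    intro hrC
    have hC2 : 2 ≤ C := by omega
    have hC0 : C ≠ 0 := by omega
    have hcore : B !![ϖ ^ (C - 1), 0; 0, 1] = 0 := by
      set n := C - 1 with hndef
      have hn1 : 1 ≤ n := by omega
      have h2n : C ≤ 2 * n := by omega
      have hvpn : v (ϖ ^ n) = ev n := hvp n
      have hpn1 : v (ϖ ^ n) ≤ ev 1 := by rw [hvpn]; exact hevr1 n hn1
      have hpn0 : (ϖ : F) ^ n ≠ 0 := pow_ne_zero n hϖ0
      have hC1 : (ev n : Zm0) ≤ ev 1 := hevr1 n hn1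
      -- extract a point where ψ is nontrivial
      obtain ⟨t0, ht0U, ht0Ω⟩ := hleast n (by omega)
      obtain ⟨x, y, hQ0, ht0eq⟩ := ht0U.1
      have hent := ht0U.2
      rw [ht0eq] at hent ht0Ω
      rw [if_neg (by omega : ¬ n = 0)] at hent
      have hsub0 : tmat a b c x y - 1 = !![x - 1, c * y; -(a * y), x - b * y - 1] := by
        ext i j
        fin_cases i <;> fin_cases j <;> simp [tmat, Matrix.one_apply] <;> ring
      have hx1 : v (x - 1) ≤ ev n := by
        have h00 := hent 0 0; rw [hsub0] at h00; exact h00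
      have hyv : v y ≤ ev n := by
        have h01 := hent 0 1; rw [hsub0] at h01
        have hcy : v (c * y) ≤ ev n := h01
        rwa [_root_.map_mul, hc, ev_zero, one_mul] at hcy
      have hxu : v x = ev 0 := by
        have he : x = 1 + (x - 1) := by ring
        rw [he]; exact unit_plus_small v_one_eq (le_trans hx1 hC1)
      set z₀ := x⁻¹ * y with hz₀def
      have hz₀v : v z₀ ≤ ev n := hint _ _ _ (v_inv_eq hxu).le hyv
      have hψz₀ne : Ω (tmat a b c 1 z₀) ≠ 1 := by
        rw [← hψX x y hxu hQ0]; exact ht0Ω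
      set δ := (ϖ ^ n)⁻¹ * z₀ with hδdef
      have hδint : v δ ≤ ev 0 := by
        rw [hδdef, _root_.map_mul, map_inv₀, hvpn]
        calc (ev n : Zm0)⁻¹ * v z₀ ≤ (ev n)⁻¹ * ev n := mul_le_mul_right hz₀v _
          _ = ev 0 := by rw [ev_inv, ev_mul]; norm_num
      have hδneg : v (-δ) ≤ ev 0 := by rw [Valuation.map_neg]; exact hδint
      have hz₀eq : ϖ ^ n * δ = z₀ := by rw [hδdef]; field_simp
      -- rep-inverse machinery
      have hmemσ : ∀ d : F, v d ≤ ev 0 → ∀ u ∈ R, rep (invc (d + invc u)) ∈ R := by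
        intro d hd u huR
        exact (hrepP _ (hinvc_int _ (le_trans (v.map_add _ _)
          (max_le hd (hinvc_int u (hRint u huR)))))).1.1
      have hstep : ∀ d : F, v d ≤ ev 0 → ∀ u ∈ R,
          v (invc (rep (invc (d + invc u))) - (d + invc u)) ≤ ev 1 := by
        intro d hd u huR
        have hu0 := hRint u huR
        have h1 := hinvc_int u hu0
        have hs0 : v (d + invc u) ≤ ev 0 := le_trans (v.map_add _ _) (max_le hd h1)
        have h2 := hinvc_int _ hs0
        have hw := (hrepP _ h2).1
        have hw0 : v (rep (invc (d + invc u))) ≤ ev 0 := hRint _ hw.1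
        have e1 : v (invc (rep (invc (d + invc u))) - invc (invc (d + invc u))) ≤ ev 1 :=
          hinvc_congr _ _ hw0 h2 (by rw [hsubswap]; exact hw.2)
        have e2 : v (invc (invc (d + invc u)) - (d + invc u)) ≤ ev 1 := hinvc_invol _ hs0
        have he : invc (rep (invc (d + invc u))) - (d + invc u)
            = (invc (rep (invc (d + invc u))) - invc (invc (d + invc u)))
              + (invc (invc (d + invc u)) - (d + invc u)) := by ring
        rw [he]; exact le_trans (v.map_add _ _) (max_le e1 e2)
      have hinv2 : ∀ d : F, v d ≤ ev 0 → ∀ u ∈ R,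
          rep (invc (-d + invc (rep (invc (d + invc u))))) = u := by
        intro d hd u huR
        have hu0 := hRint u huR
        have e3 := hstep d hd u huR
        have hw0 : v (rep (invc (d + invc u))) ≤ ev 0 := hRint _ (hmemσ d hd u huR)
        have e4 : v ((-d + invc (rep (invc (d + invc u)))) - invc u) ≤ ev 1 := by
          have he : (-d + invc (rep (invc (d + invc u)))) - invc u
              = invc (rep (invc (d + invc u))) - (d + invc u) := by ring
          rw [he]; exact e3
        have h5 : v (-d + invc (rep (invc (d + invc u)))) ≤ ev 0 :=
          le_trans (v.map_add _ _)
            (max_le (by rw [Valuation.map_neg]; exact hd) (hinvc_int _ hw0))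
        have e5 : v (invc (-d + invc (rep (invc (d + invc u)))) - invc (invc u)) ≤ ev 1 :=
          hinvc_congr _ _ h5 (hinvc_int u hu0) e4
        have e6 : v (invc (invc u) - u) ≤ ev 1 := hinvc_invol u hu0
        have e7 : v (invc (-d + invc (rep (invc (d + invc u)))) - u) ≤ ev 1 := by
          have he : invc (-d + invc (rep (invc (d + invc u)))) - u
              = (invc (-d + invc (rep (invc (d + invc u)))) - invc (invc u))
                + (invc (invc u) - u) := by ring
          rw [he]; exact le_trans (v.map_add _ _) (max_le e5 e6)
        exact ((hrepP _ (hinvc_int _ h5)).2 u huR e7).symm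
      -- bounds on the summands
      have hφbound : ∀ u : F, v u ≤ ev 0 → v (ϖ ^ n * invc u) ≤ ev n := by
        intro u hu
        rw [_root_.map_mul, hvpn]
        calc (ev n : Zm0) * v (invc u) ≤ ev n * ev 0 := mul_le_mul_right (hinvc_int u hu) _
          _ = ev n := by rw [ev_mul, add_zero]
      have hφ1 : ∀ u : F, v u ≤ ev 0 → v (ϖ ^ n * invc u) ≤ ev 1 :=
        fun u hu => le_trans (hφbound u hu) hC1
      -- the reindexing identity
      have hsumB : Ω (tmat a b c 1 z₀) * (∑ u ∈ R, Ω (tmat a b c 1 (ϖ ^ n * invc u)))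
          = ∑ u ∈ R, Ω (tmat a b c 1 (ϖ ^ n * invc u)) := by
        rw [Finset.mul_sum]
        refine Finset.sum_bij' (fun u _ => rep (invc (δ + invc u)))
          (fun u _ => rep (invc (-δ + invc u)))
          (fun u hu => hmemσ δ hδint u hu) (fun u hu => hmemσ (-δ) hδneg u hu)
          (fun u hu => hinv2 δ hδint u hu)
          (fun u hu => by simpa using hinv2 (-δ) hδneg u hu) ?_
        intro u hu
        have huR := hu
        have hu0 := hRint u huR
        have hσR := hmemσ δ hδint u huR
        have hσ0 := hRint _ hσR
        calc Ω (tmat a b c 1 z₀) * Ω (tmat a b c 1 (ϖ ^ n * invc u))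
            = Ω (tmat a b c 1 (z₀ + ϖ ^ n * invc u)) :=
              hψadd hC0 n _ _ hn1 h2n hz₀v (hφbound u hu0)
          _ = Ω (tmat a b c 1 (ϖ ^ n * invc (rep (invc (δ + invc u))))) := by
              refine hψcong hC0 _ _ ?_ ?_ ?_
              · exact le_trans (v.map_add _ _) (max_le (le_trans hz₀v hC1) (hφ1 u hu0))
              · exact hφ1 _ hσ0
              · have he : (z₀ + ϖ ^ n * invc u) - ϖ ^ n * invc (rep (invc (δ + invc u)))
                    = ϖ ^ n * (-(invc (rep (invc (δ + invc u))) - (δ + invc u))) := by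
                  rw [← hz₀eq]; ring
                rw [he, _root_.map_mul, hvpn, Valuation.map_neg]
                calc (ev n : Zm0) * v (invc (rep (invc (δ + invc u))) - (δ + invc u))
                    ≤ ev n * ev 1 := mul_le_mul_right (hstep δ hδint u huR) _
                  _ ≤ ev C := by rw [ev_mul]; exact ev_le.2 (by push_cast; omega)
      -- hence the full sum vanishes
      have hSzero : ∑ u ∈ R, Ω (tmat a b c 1 (ϖ ^ n * invc u)) = 0 := by
        by_contra hne
        apply hψz₀ne
        have hfac : (Ω (tmat a b c 1 z₀) - 1)
            * (∑ u ∈ R, Ω (tmat a b c 1 (ϖ ^ n * invc u))) = 0 := by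
          linear_combination hsumB
        rcases mul_eq_zero.1 hfac with h | h
        · exact sub_eq_zero.1 h
        · exact absurd h hne
      -- match with the master-relation sum
      have hmatch : ∀ u ∈ R.filter (fun u => ¬ v u ≤ ev 1),
          Ω (tmat a b c (c * u + b * ϖ ^ n) (ϖ ^ n))
            = Ω (tmat a b c 1 (ϖ ^ n * invc u)) := by
        intro u hu
        obtain ⟨huR, hu1⟩ := Finset.mem_filter.1 hu
        have hu0 : v u = ev 0 := zm0_unit (hRint u huR) hu1
        have hune : u ≠ 0 := v_ne_zero_of_eq_ev hu0
        have hx₀u : v (c * u + b * ϖ ^ n) = ev 0 :=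
          unit_plus_small (v_mul_unit hc hu0) (hint b _ _ hbo hpn1)
        have hx₀ne : c * u + b * ϖ ^ n ≠ 0 := v_ne_zero_of_eq_ev hx₀u
        rw [hψX _ _ hx₀u (hQne _ _ hx₀u hpn1), hinvc_u u hu1]
        refine hψcong hC0 _ _ ?_ ?_ ?_
        · exact hint _ _ _ (v_inv_eq hx₀u).le hpn1
        · rw [_root_.map_mul, hvpn]
          calc (ev n : Zm0) * v (c * u)⁻¹ ≤ ev n * ev 0 :=
                mul_le_mul_right (v_inv_eq (v_mul_unit hc hu0)).le _
            _ = ev n := by rw [ev_mul, add_zero]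
            _ ≤ ev 1 := hC1
        · have he : (c * u + b * ϖ ^ n)⁻¹ * ϖ ^ n - ϖ ^ n * (c * u)⁻¹
              = (ϖ ^ n * (-(b * ϖ ^ n))) / ((c * u) * (c * u + b * ϖ ^ n)) := by
            field_simp
            ring
          rw [he]
          refine hdivu _ _ _ ?_ (v_mul_unit (v_mul_unit hc hu0) hx₀u)
          rw [_root_.map_mul, hvpn, Valuation.map_neg]
          calc (ev n : Zm0) * v (b * ϖ ^ n) ≤ ev n * ev n :=
                mul_le_mul_right (hint b _ _ hbo hvpn.le) _
            _ ≤ ev C := by rw [ev_mul]; exact ev_le.2 (by push_cast; omega)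
      -- conclude
      have hkeyn := key n hn1
      have hSsum : ∑ u ∈ R.filter (fun u => ¬ v u ≤ ev 1),
          Ω (tmat a b c (c * u + b * ϖ ^ n) (ϖ ^ n))
            = ∑ u ∈ R.filter (fun u => ¬ v u ≤ ev 1), Ω (tmat a b c 1 (ϖ ^ n * invc u)) :=
        Finset.sum_congr rfl hmatch
      have hsplit := Finset.sum_filter_add_sum_filter_not R (fun u => v u ≤ ev 1)
        (fun u => Ω (tmat a b c 1 (ϖ ^ n * invc u)))
      rw [hfilter, Finset.sum_singleton] at hsplit
      have h1 : Ω (tmat a b c 1 (ϖ ^ n * invc (rep 0))) = 1 := by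
        rw [hinvc_p _ hu₀p, mul_zero, tmat_one, hΩ1]
      rw [h1] at hsplit
      rw [hkeyn, hSsum, hsplit, hSzero, neg_zero, zero_mul]

    -- descending induction
    have hdesc : ∀ k m : ℕ, 1 ≤ m → m + k = C - 1 → B !![ϖ ^ m, 0; 0, 1] = 0 := by
      intro k
      induction k with
      | zero =>
        intro m hm hmk
        have : m = C - 1 := by omega
        rw [this]; exact hcore
      | succ k ih =>
        intro m hm hmk
        have h1 : B !![ϖ ^ (m + 1), 0; 0, 1] = 0 := ih (m + 1) (by omega) (by omega)
        have h2 := hAL m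
        rw [h1] at h2
        have hBw : B (!![ϖ ^ m, 0; 0, 1] * wmat F) = 0 := by
          rcases mul_eq_zero.1 h2.symm with h | h
          · exact absurd (neg_eq_zero.1 h) hχϖ
          · exact h
        rw [key m hm, hBw, mul_zero]
    exact hdesc (C - 1 - r) r hr (by omega)
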